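/- Correspondence, soundness direction: for any RS (S,A) and n-step interactive process π = (γ,δ) with states W_i = C_i ∪ D_i, if the RS process P_i = [∏_{a∈A} a | D_i | K_{γ^i}] makes a transition P_i →⟨W ▹ R,I,P⟩ Q (for i < n), then W = W_i, P = D_{i+1}, and Q ≡ P_{i+1}. -/

import Mathlib

/-- Context processes `K ::= 0 | X | C.K | K+K | rec X. K` (de Bruijn variables). -/
inductive Ctx (α : Type) : Type where
  | nil : Ctx α
  | var : ℕ → Ctx α
  | pre : Finset α → Ctx α → Ctx α
  | choice : Ctx α → Ctx α → Ctx α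
  | mu : Ctx α → Ctx α

/-- Substitution of the context `T` for the variable of de Bruijn index `d`. -/
def Ctx.subst {α : Type} (d : ℕ) (T : Ctx α) : Ctx α → Ctx α
  | .nil => .nil
  | .var n => if n = d then T else .var n
  | pre C K => .pre C (Ctx.subst d T K)
  | .choice K₁ K₂ => .choice (Ctx.subst d T K₁) (Ctx.subst d T K₂)
  | .mu K => .mu (Ctx.subst (d + 1) T K)

/-- Mixture processes `M ::= (R,I,P) | D | K | M|M`. -/
inductive Mix (α : Type) : Type where
  | reaction : Finset α → Finset α → Finset α → Mix α
  | entities : Finset α → Mix α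
  | ctx : Ctx α → Mix α
  | par : Mix α → Mix α → Mix α

/-- A transition label `⟨W ▹ R, I, P⟩`. -/
structure Label (α : Type) where
  W : Finset α
  R : Finset α
  I : Finset α
  P : Finset α

/-- SOS transitions of context processes: rules (Cxt), (Rec), (Suml), (Sumr). -/
inductive CtxStep {α : Type} : Ctx α → Label α → Ctx α → Prop where
  | cxt (C : Finset α) (K : Ctx α) : CtxStep (.pre C K) ⟨C, ∅, ∅, ∅⟩ K
  | unfold {K : Ctx α} {l K'} : CtxStep (Ctx.subst 0 (.mu K) K) l K' → CtxStep (.mu K) l K'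
  | suml {K₁ K₂ l K'} : CtxStep K₁ l K' → CtxStep (.choice K₁ K₂) l K'
  | sumr {K₁ K₂ l K'} : CtxStep K₂ l K' → CtxStep (.choice K₁ K₂) l K'

/-- SOS transitions of mixture processes: rules (Ent), (Cxt), (Pro), (Inh), (Par).
Reactions are assumed well formed: `R ∩ I = ∅`. -/
inductive MixStep {α : Type} [DecidableEq α] : Mix α → Label α → Mix α → Prop where
  | ent (D : Finset α) : MixStep (.entities D) ⟨D, ∅, ∅, ∅⟩ (.entities ∅)
  | ctx {K l K'} : CtxStep K l K' → MixStep (.ctx K) l (.ctx K')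
  | pro {R I P : Finset α} : R ∩ I = ∅ →
      MixStep (.reaction R I P) ⟨∅, R, I, P⟩ (.par (.reaction R I P) (.entities P))
  | inh {R I P J Q : Finset α} : R ∩ I = ∅ → J ⊆ I → Q ⊆ R → (J ∪ Q).Nonempty →
      MixStep (.reaction R I P) ⟨∅, J, Q, ∅⟩ (.reaction R I P)
  | par {M₁ l₁ M₁' M₂ l₂ M₂'} : MixStep M₁ l₁ M₁' → MixStep M₂ l₂ M₂' →
      (l₁.W ∪ l₂.W ∪ l₁.R ∪ l₂.R) ∩ (l₁.I ∪ l₂.I) = ∅ →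
      MixStep (.par M₁ M₂) ⟨l₁.W ∪ l₂.W, l₁.R ∪ l₂.R, l₁.I ∪ l₂.I, l₁.P ∪ l₂.P⟩
        (.par M₁' M₂')

/-- Structural equivalence of mixtures: commutative monoid laws for `|` with unit `∅`,
and merging of entity sets. -/
inductive StructEq {α : Type} [DecidableEq α] : Mix α → Mix α → Prop where
  | refl (M : Mix α) : StructEq M M
  | symm {M N} : StructEq M N → StructEq N M
  | trans {M N O} : StructEq M N → StructEq N O → StructEq M O
  | parComm (M N : Mix α) : StructEq (.par M N) (.par N M)
  | parAssoc (M N O : Mix α) : StructEq (.par (.par M N) O) (.par M (.par N O))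
  | parUnit (M : Mix α) : StructEq (.par M (.entities ∅)) M
  | entMerge (D₁ D₂ : Finset α) :
      StructEq (.par (.entities D₁) (.entities D₂)) (.entities (D₁ ∪ D₂))
  | parCong {M M' N N'} : StructEq M M' → StructEq N N' →
      StructEq (.par M N) (.par M' N')

/-- Rule (Sys): top-level transitions of RS processes `[M]`. -/
inductive SysStep {α : Type} [DecidableEq α] : Mix α → Label α → Mix α → Prop where
  | sys {M l M'} : MixStep M l M' → l.R ⊆ l.W → SysStep M l M'

/-- The parallel composition `∏_{a ∈ A} a` of a finite list of reactions. -/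
def prodReactions {α : Type} (A : List (Finset α × Finset α × Finset α)) : Mix α :=
  A.foldr (fun a acc => .par (.reaction a.1 a.2.1 a.2.2) acc) (.entities ∅)

/-- Result of a single reaction `(R,I,P)` on `W`. -/
def res {α : Type} [DecidableEq α] (a : Finset α × Finset α × Finset α) (W : Finset α) :
    Finset α :=
  if a.1 ⊆ W ∧ a.2.1 ∩ W = ∅ then a.2.2 else ∅

/-- Result of the set of reactions `A` on `W`. -/
def resA {α : Type} [DecidableEq α] (A : List (Finset α × Finset α × Finset α))
    (W : Finset α) : Finset α :=
  A.foldr (fun a acc => res a W ∪ acc) ∅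

/-- The context process `K_{γ^i} = C_i.C_{i+1}.⋯.C_n.0`. -/
def Kgamma {α : Type} (C : ℕ → Finset α) (i n : ℕ) : Ctx α :=
  ((List.range (n + 1 - i)).map (fun j => C (i + j))).foldr Ctx.pre Ctx.nil

/-- The encoding `⟦𝒜,π⟧_i = [∏_{a∈A} a | D_i | K_{γ^i}]` of the `i`-th step of an
interactive process. -/
def Penc {α : Type} (A : List (Finset α × Finset α × Finset α))
    (C D : ℕ → Finset α) (n i : ℕ) : Mix α :=
  .par (prodReactions A) (.par (.entities (D i)) (.ctx (Kgamma C i n)))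

/-- `∅ | M ≡ M`. -/
lemma structEq_empty_par {α : Type} [DecidableEq α] (M : Mix α) :
    StructEq (.par (.entities ∅) M) M :=
  .trans (.parComm _ _) (.parUnit M)

/-- Rearrangement: `(x|p)|(y|q) ≡ (x|y)|(p∪q)` for entity sets `p,q`. -/
lemma structEq_shuffle {α : Type} [DecidableEq α] (x y : Mix α) (p q : Finset α) :
    StructEq (.par (.par x (.entities p)) (.par y (.entities q)))
             (.par (.par x y) (.entities (p ∪ q))) := by
  refine .trans (.symm (.parAssoc _ _ _)) ?_
  refine .trans (.parCong (.parAssoc x (.entities p) y) (.refl _)) ?_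
  refine .trans (.parCong (.parCong (.refl x) (.parComm _ _)) (.refl _)) ?_
  refine .trans (.parCong (.symm (.parAssoc x y (.entities p))) (.refl _)) ?_
  exact .trans (.parAssoc _ _ _) (.parCong (.refl _) (.entMerge p q))

/-- Any transition of `∏_{a∈A} a` has empty `W`-component. -/
lemma prod_step_W {α : Type} [DecidableEq α]
    (A : List (Finset α × Finset α × Finset α)) :
    ∀ {l : Label α} {M'}, MixStep (prodReactions A) l M' → l.W = ∅ := by
  induction A with
  | nil =>
    intro l M' h
    simp only [prodReactions, List.foldr] at h
    cases h; rfl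
  | cons a A ih =>
    intro l M' h
    simp only [prodReactions, List.foldr] at h ih
    cases h with
    | par h1 h2 hside =>
      cases h1 with
      | pro h => simp [ih h2]
      | inh h hJ hQ hne => simp [ih h2]

/-- Characterization of transitions of `∏_{a∈A} a` whose requests are granted
by an ambient state `W`. -/
lemma prod_step {α : Type} [DecidableEq α]
    (A : List (Finset α × Finset α × Finset α)) (W : Finset α) :
    ∀ {l : Label α} {M'}, MixStep (prodReactions A) l M' →
      l.R ⊆ W → l.I ∩ W = ∅ →
      l.P = resA A W ∧
        StructEq M' (.par (prodReactions A) (.entities (resA A W))) := by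
  induction A with
  | nil =>
    intro l M' h hR hI
    have h' : MixStep (Mix.entities (∅ : Finset α)) l M' := h
    cases h'
    refine ⟨rfl, ?_⟩
    have := StructEq.entMerge (α := α) ∅ ∅
    simpa [resA, prodReactions] using StructEq.symm this
  | cons a A ih =>
    intro l M' h hR hI
    have h' : MixStep (Mix.par (Mix.reaction a.1 a.2.1 a.2.2) (prodReactions A)) l M' := h
    clear h
    have hresA : resA (a :: A) W = res a W ∪ resA A W := rfl
    cases h' with
    | par h1 h2 hside =>
      rename_i l₁ M₁' l₂ M₂'
      have hR1 : l₁.R ⊆ W := (Finset.subset_union_left).trans hR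
      have hR2 : l₂.R ⊆ W := (Finset.subset_union_right).trans hR
      have hI1 : l₁.I ∩ W = ∅ := Finset.subset_empty.mp
        (hI ▸ Finset.inter_subset_inter Finset.subset_union_left (subset_refl W))
      have hI2 : l₂.I ∩ W = ∅ := Finset.subset_empty.mp
        (hI ▸ Finset.inter_subset_inter Finset.subset_union_right (subset_refl W))
      obtain ⟨hP2, hS2⟩ := ih h2 hR2 hI2
      cases h1 with
      | pro hri =>
        have hres : res a W = a.2.2 := by
          rw [res, if_pos ⟨hR1, hI1⟩]
        constructor
        · show a.2.2 ∪ l₂.P = resA (a :: A) W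
          rw [hresA, hres, hP2]
        · show StructEq (Mix.par (Mix.par (Mix.reaction a.1 a.2.1 a.2.2)
            (Mix.entities a.2.2)) M₂') (Mix.par (prodReactions (a :: A))
            (Mix.entities (resA (a :: A) W)))
          rw [hresA, hres]
          exact .trans (.parCong (.refl _) hS2)
            (structEq_shuffle (Mix.reaction a.1 a.2.1 a.2.2) (prodReactions A)
              a.2.2 (resA A W))
      | inh hri hJ hQ hne =>
        rename_i J Q'
        have hQW : Q' ∩ W = ∅ := hI1
        have hJW : J ⊆ W := hR1
        have hres : res a W = ∅ := by
          rw [res, if_neg]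
          rintro ⟨hsub, hint⟩
          obtain ⟨x, hx⟩ := hne
          rcases Finset.mem_union.mp hx with hxJ | hxQ
          · have hxW : x ∈ W := hJW hxJ
            have : x ∈ a.2.1 ∩ W := Finset.mem_inter.mpr ⟨hJ hxJ, hxW⟩
            simp [hint] at this
          · have hxW : x ∈ W := hsub (hQ hxQ)
            have : x ∈ Q' ∩ W := Finset.mem_inter.mpr ⟨hxQ, hxW⟩
            simp [hQW] at this
        constructor
        · show ∅ ∪ l₂.P = resA (a :: A) W
          rw [hresA, hres, hP2]
        · show StructEq (Mix.par (Mix.reaction a.1 a.2.1 a.2.2) M₂')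
            (Mix.par (prodReactions (a :: A)) (Mix.entities (resA (a :: A) W)))
          rw [hresA, hres, Finset.empty_union]
          exact .trans (.parCong (.refl _) hS2) (.symm (.parAssoc _ _ _))

/-- Unfolding of `K_{γ^i}` one step. -/
lemma Kgamma_succ {α : Type} (C : ℕ → Finset α) {i n : ℕ} (h : i ≤ n) :
    Kgamma C i n = .pre (C i) (Kgamma C (i + 1) n) := by
  unfold Kgamma
  have h1 : n + 1 - i = (n - i) + 1 := by omega
  have h2 : n + 1 - (i + 1) = n - i := by omega
  rw [h1, h2, List.range_succ_eq_map, List.map_cons, List.map_map, List.foldr_cons]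
  congr 2
  congr 1
  funext j
  simp only [Function.comp_apply]
  congr 1
  omega

/-- Correspondence, soundness: any transition of the encoded process `P_i` has
label `⟨W_i ▹ R,I,D_{i+1}⟩` with `W_i = C_i ∪ D_i` and target `≡ P_{i+1}`. -/
theorem correspondence_sound {α : Type} [DecidableEq α]
    (A : List (Finset α × Finset α × Finset α)) (C D : ℕ → Finset α) (n : ℕ)
    (hwf : ∀ a ∈ A, a.1 ∩ a.2.1 = ∅ ∧ a.1.Nonempty ∧ a.2.1.Nonempty)
    (hD0 : D 0 = ∅) (hDsucc : ∀ i < n, D (i + 1) = resA A (D i ∪ C i))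
    {i : ℕ} (hi : i < n) {l : Label α} {Q : Mix α}
    (h : SysStep (Penc A C D n i) l Q) :
    l.W = C i ∪ D i ∧ l.P = D (i + 1) ∧ StructEq Q (Penc A C D n (i + 1)) := by
  cases h with | sys hM hRW => ?_
  rw [Penc, Kgamma_succ C hi.le] at hM
  cases hM with
  | par h1 h2 hside =>
    rename_i l₁ M₁' l₂ M₂'
    cases h2 with
    | par h21 h22 hside2 =>
      rename_i l₂₁ M₂₁' l₂₂ M₂₂'
      cases h21
      cases h22 with
      | ctx hK =>
        cases hK
        -- now the labels are fully determined except l₁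
        have hW1 : l₁.W = ∅ := prod_step_W A h1
        simp only [hW1, Finset.empty_union, Finset.union_empty] at hRW hside ⊢
        have hR1 : l₁.R ⊆ D i ∪ C i := by
          simpa [hW1] using hRW
        have hI1 : l₁.I ∩ (D i ∪ C i) = ∅ := by
          apply Finset.subset_empty.mp
          rw [← hside]
          intro x hx
          simp only [Finset.mem_inter, Finset.mem_union] at hx ⊢
          tauto
        obtain ⟨hP1, hS1⟩ := prod_step A (D i ∪ C i) h1 hR1 hI1
        have hDi : resA A (D i ∪ C i) = D (i + 1) := (hDsucc i hi).symm
        rw [hDi] at hP1 hS1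
        refine ⟨Finset.union_comm _ _, by simp [hP1], ?_⟩
        refine .trans (StructEq.parCong hS1 (StructEq.refl _)) ?_
        refine .trans (StructEq.parCong (StructEq.refl _)
          (structEq_empty_par (Mix.ctx (Kgamma C (i + 1) n)))) ?_
        exact .trans (.parAssoc _ _ _) (.refl _)
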